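/- Let L ⊆ ℤⁿ be a pure lattice (L = L_pure) of rank r. Then μ(I_L) = r, i.e., I_L can be generated by r binomials and by no fewer binomials. -/

import Mathlib

open MvPolynomial

noncomputable section

/-- The integer vector associated to a natural exponent vector. -/
def natVec {ι : Type*} (u : ι →₀ ℕ) : ι → ℤ := fun i => (u i : ℤ)

/-- The lattice ideal `I_L` of a lattice `L ⊆ ℤ^ι` in `k[x_i : i ∈ ι]`. -/
def latticeIdeal (k : Type*) [Field k] {ι : Type*} (L : Submodule ℤ (ι → ℤ)) :
    Ideal (MvPolynomial ι k) :=
  Ideal.span {f | ∃ u v : ι →₀ ℕ, natVec u - natVec v ∈ L ∧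
    f = monomial u (1 : k) - monomial v 1}

/-- `f` is a binomial `x^u - x^v` belonging to the lattice ideal `I_L`. -/
def IsLatticeBinomial (k : Type*) [Field k] {ι : Type*} (L : Submodule ℤ (ι → ℤ))
    (f : MvPolynomial ι k) : Prop :=
  ∃ u v : ι →₀ ℕ, natVec u - natVec v ∈ L ∧ f = monomial u (1 : k) - monomial v 1

/-- The `I_L`-fiber of `u` : all exponent vectors `v` with `v - u ∈ L`. -/
def fiber {ι : Type*} (L : Submodule ℤ (ι → ℤ)) (u : ι →₀ ℕ) : Set (ι →₀ ℕ) :=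
  {v | natVec v - natVec u ∈ L}

/-- `L⁺ = L ∩ ℕ^ι`. -/
def Lplus {ι : Type*} (L : Submodule ℤ (ι → ℤ)) : Set (ι → ℤ) :=
  {w | w ∈ L ∧ ∀ i, 0 ≤ w i}

/-- `L_pure`, the subgroup of `L` generated by `L⁺`. -/
def Lpure {ι : Type*} (L : Submodule ℤ (ι → ℤ)) : Submodule ℤ (ι → ℤ) :=
  Submodule.span ℤ (Lplus L)

/-- `σ_L`, the union of the supports of elements of `L⁺`. -/
def sigmaL {ι : Type*} (L : Submodule ℤ (ι → ℤ)) : Set ι :=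
  {i | ∃ w ∈ Lplus L, w i ≠ 0}

/-- `F̄ ≤_I Ḡ` : some translate of `F` is contained in `G`. -/
def fiberLE {ι : Type*} (F G : Set (ι →₀ ℕ)) : Prop :=
  ∃ t : ι →₀ ℕ, (fun v => t + v) '' F ⊆ G

/-- `F ≡_I G` : equivalence of fibers. -/
def fiberEquiv {ι : Type*} (F G : Set (ι →₀ ℕ)) : Prop :=
  fiberLE F G ∧ fiberLE G F

/-- `F̄ <_I Ḡ`. -/
def fiberLT {ι : Type*} (F G : Set (ι →₀ ℕ)) : Prop :=
  fiberLE F G ∧ ¬ fiberEquiv F G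

/-- The ideal `I_{<F̄}` generated by binomials of `I_L` whose fiber class is `<_I F̄`. -/
def idealLT (k : Type*) [Field k] {ι : Type*} (L : Submodule ℤ (ι → ℤ))
    (F : Set (ι →₀ ℕ)) : Ideal (MvPolynomial ι k) :=
  Ideal.span {f | ∃ u v : ι →₀ ℕ, natVec u - natVec v ∈ L ∧
    f = monomial u (1 : k) - monomial v 1 ∧ fiberLT (fiber L u) F}

/-- The ideal `I_{≤F̄}` generated by binomials of `I_L` whose fiber class is `≤_I F̄`. -/
def idealLE (k : Type*) [Field k] {ι : Type*} (L : Submodule ℤ (ι → ℤ))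
    (F : Set (ι →₀ ℕ)) : Ideal (MvPolynomial ι k) :=
  Ideal.span {f | ∃ u v : ι →₀ ℕ, natVec u - natVec v ∈ L ∧
    f = monomial u (1 : k) - monomial v 1 ∧ fiberLE (fiber L u) F}

/-- `μ(I_L)` : the least cardinality of a binomial generating set of `I_L`. -/
def muIdeal (k : Type*) [Field k] {ι : Type*} (L : Submodule ℤ (ι → ℤ)) : ℕ :=
  sInf {m | ∃ S : Finset (MvPolynomial ι k), S.card = m ∧
    (∀ f ∈ S, IsLatticeBinomial k L f) ∧
    Ideal.span (S : Set (MvPolynomial ι k)) = latticeIdeal k L}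

/-- A Markov basis of `I_L` : a binomial generating set of least cardinality `μ(I_L)`. -/
def IsMarkovBasis (k : Type*) [Field k] {ι : Type*} (L : Submodule ℤ (ι → ℤ))
    (S : Finset (MvPolynomial ι k)) : Prop :=
  (∀ f ∈ S, IsLatticeBinomial k L f) ∧
  Ideal.span (S : Set (MvPolynomial ι k)) = latticeIdeal k L ∧
  S.card = muIdeal k L

/-- `u` is an `L`-primitive vector : `u ≠ 0`, `u ∈ L`, and whenever `q • u ∈ L` for
a rational `q`, then `q` is an integer. -/
def IsLPrimitive {ι : Type*} (L : Submodule ℤ (ι → ℤ)) (u : ι → ℤ) : Prop :=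
  u ≠ 0 ∧ u ∈ L ∧ ∀ (q : ℚ) (w : ι → ℤ), w ∈ L →
    (∀ i, (w i : ℚ) = q * (u i : ℚ)) → ∃ m : ℤ, q = (m : ℚ)

/-- Projection onto the coordinates in `σ_L`. -/
def projSigma {n : ℕ} (L : Submodule ℤ (Fin n → ℤ)) :
    (Fin n → ℤ) →ₗ[ℤ] ({i : Fin n // i ∈ sigmaL L} → ℤ) :=
  LinearMap.pi fun j => LinearMap.proj j.1

/-- Projection onto the coordinates outside `σ_L` (giving `u ↦ u^σ`). -/
def projCompl {n : ℕ} (L : Submodule ℤ (Fin n → ℤ)) :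
    (Fin n → ℤ) →ₗ[ℤ] ({i : Fin n // i ∉ sigmaL L} → ℤ) :=
  LinearMap.pi fun j => LinearMap.proj j.1

/-- An indispensable binomial: it appears, up to a constant multiple, in every Markov basis. -/
def IsIndispensableBinomial (k : Type*) [Field k] {ι : Type*} (L : Submodule ℤ (ι → ℤ))
    (f : MvPolynomial ι k) : Prop :=
  ∀ S : Finset (MvPolynomial ι k), IsMarkovBasis k L S → ∃ c : k, c ≠ 0 ∧ c • f ∈ S

/-- An indispensable monomial: every Markov basis contains a binomial having it as a term. -/
def IsIndispensableMonomial (k : Type*) [Field k] {ι : Type*} (L : Submodule ℤ (ι → ℤ))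
    (u : ι →₀ ℕ) : Prop :=
  ∀ S : Finset (MvPolynomial ι k), IsMarkovBasis k L S → ∃ f ∈ S, ∃ v : ι →₀ ℕ,
    f = monomial u (1 : k) - monomial v 1 ∨ f = monomial v (1 : k) - monomial u 1

namespace Stmt13Aux

open MvPolynomial

variable {k : Type*} [Field k] {n : ℕ}

/-- Turn a nonnegative integer vector into a natural exponent vector. -/
def toExp {n : ℕ} (w : Fin n → ℤ) : Fin n →₀ ℕ :=
  Finsupp.equivFunOnFinite.symm (fun i => (w i).toNat)

lemma toExp_apply (w : Fin n → ℤ) (i : Fin n) : toExp w i = (w i).toNat := rfl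

lemma natVec_toExp {w : Fin n → ℤ} (hw : ∀ i, 0 ≤ w i) : natVec (toExp w) = w := by
  funext i
  simp [natVec, toExp_apply, Int.toNat_of_nonneg (hw i)]

lemma natVec_sub_natVec_toExp (x : Fin n → ℤ) :
    natVec (toExp x) - natVec (toExp (-x)) = x := by
  funext i
  simp only [Pi.sub_apply, natVec, toExp_apply, Pi.neg_apply]
  omega

lemma natVec_eq_sum (u : Fin n →₀ ℕ) :
    natVec u = ∑ i ∈ u.support, (u i) • Pi.single i (1 : ℤ) := by
  classical
  funext j
  simp only [Finset.sum_apply, Pi.smul_apply, Pi.single_apply, smul_eq_mul, natVec]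
  rw [Finset.sum_congr rfl (g := fun i => if j = i then ((u i : ℤ)) else 0)
    (fun i _ => by by_cases hij : j = i <;> simp [hij])]
  rw [Finset.sum_ite_eq u.support j (fun i => (u i : ℤ))]
  by_cases h : j ∈ u.support
  · simp [h]
  · simp [h, Finsupp.notMem_support_iff.mp h]

/-- The character `ψ` associated to a lattice, see `psi_monomial`. -/
def psi (k : Type*) [Field k] {n : ℕ} (L : Submodule ℤ (Fin n → ℤ)) :
    MvPolynomial (Fin n) k →ₐ[k] AddMonoidAlgebra k ((Fin n → ℤ) ⧸ L) :=
  aeval fun i : Fin n => AddMonoidAlgebra.single (L.mkQ (Pi.single i 1)) (1 : k)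

lemma psi_monomial (L : Submodule ℤ (Fin n → ℤ)) (u : Fin n →₀ ℕ) :
    psi k L (monomial u (1 : k)) = AddMonoidAlgebra.single (L.mkQ (natVec u)) 1 := by
  classical
  rw [psi, aeval_monomial, map_one, one_mul]
  rw [Finsupp.prod]
  have : ∀ i ∈ u.support,
      AddMonoidAlgebra.single (L.mkQ (Pi.single i 1)) (1:k) ^ u i
        = AddMonoidAlgebra.single (u i • L.mkQ (Pi.single i (1:ℤ))) (1:k) := by
    intro i _
    rw [AddMonoidAlgebra.single_pow, one_pow]
  rw [Finset.prod_congr rfl this, AddMonoidAlgebra.prod_single, Finset.prod_const_one]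
  congr 1
  rw [natVec_eq_sum, map_sum]
  exact Finset.sum_congr rfl fun i _ => by rw [map_nsmul]

lemma diff_mem_of_mem_latticeIdeal {L : Submodule ℤ (Fin n → ℤ)} {u v : Fin n →₀ ℕ}
    (h : (monomial u (1 : k) - monomial v 1) ∈ latticeIdeal k L) :
    natVec u - natVec v ∈ L := by
  classical
  have hker : latticeIdeal k L ≤ RingHom.ker (psi k L).toRingHom := by
    rw [latticeIdeal, Ideal.span_le]
    rintro f ⟨a, b, hab, rfl⟩
    have : L.mkQ (natVec a) = L.mkQ (natVec b) := by
      rw [Submodule.mkQ_apply, Submodule.mkQ_apply, Submodule.Quotient.eq]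
      exact hab
    simp [RingHom.mem_ker, map_sub, psi_monomial, this]
  have h0 : psi k L (monomial u (1 : k) - monomial v 1) = 0 := hker h
  rw [map_sub, psi_monomial, psi_monomial, sub_eq_zero] at h0
  have := AddMonoidAlgebra.single_inj.mp h0
  rcases this with ⟨he, _⟩ | ⟨h1, _⟩
  · have : natVec u - natVec v ∈ L := by
      have := Submodule.Quotient.eq (p := L) (x := natVec u) (y := natVec v) |>.mp ?_
      · exact this
      · simpa [Submodule.mkQ_apply] using he
    exact this
  · exact absurd h1 one_ne_zero

end Stmt13Aux
namespace Stmt13Aux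

variable {k : Type*} [Field k] {n : ℕ}

lemma monomial_sub_one_mul (J : Ideal (MvPolynomial (Fin n) k)) {A B : Fin n →₀ ℕ}
    (hA : monomial A (1 : k) - 1 ∈ J) (hB : monomial B (1 : k) - 1 ∈ J) :
    monomial (A + B) (1 : k) - 1 ∈ J := by
  have key : monomial (A + B) (1 : k) - 1
      = monomial A 1 * (monomial B 1 - 1) + (monomial A 1 - 1) := by
    rw [mul_sub, mul_one, monomial_mul, one_mul]
    ring
  rw [key]
  exact add_mem (Ideal.mul_mem_left _ _ hB) hA

lemma monomial_nsmul_sub_one (J : Ideal (MvPolynomial (Fin n) k)) {A : Fin n →₀ ℕ}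
    (hA : monomial A (1 : k) - 1 ∈ J) (m : ℕ) :
    monomial (m • A) (1 : k) - 1 ∈ J := by
  induction m with
  | zero => simp [monomial_zero']
  | succ m ih =>
      rw [succ_nsmul]
      exact monomial_sub_one_mul J ih hA

lemma monomial_sum_sub_one (J : Ideal (MvPolynomial (Fin n) k)) {r : ℕ}
    {β : Fin r → (Fin n →₀ ℕ)} (hβ : ∀ i, monomial (β i) (1 : k) - 1 ∈ J)
    (a : Fin r → ℕ) (s : Finset (Fin r)) :
    monomial (∑ i ∈ s, a i • β i) (1 : k) - 1 ∈ J := by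
  classical
  induction s using Finset.induction_on with
  | empty => simp [monomial_zero']
  | insert _ _ hx ih =>
      rw [Finset.sum_insert hx]
      exact monomial_sub_one_mul J (monomial_nsmul_sub_one J (hβ _) _) ih

/-- Main generation lemma: if `b` is a nonnegative spanning family for `L`, the
binomials `x^(b i) - 1` generate the lattice ideal. -/
lemma latticeIdeal_eq_span {L : Submodule ℤ (Fin n → ℤ)} {r : ℕ}
    {b : Fin r → (Fin n → ℤ)} (hb0 : ∀ i j, 0 ≤ b i j)
    (hspan : Submodule.span ℤ (Set.range b) = L) :
    latticeIdeal k L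
      = Ideal.span (Set.range fun i => monomial (toExp (b i)) (1 : k) - 1) := by
  classical
  set J := Ideal.span (Set.range fun i => monomial (toExp (b i)) (1 : k) - 1) with hJ
  have hgen : ∀ i, monomial (toExp (b i)) (1 : k) - 1 ∈ J :=
    fun i => Ideal.subset_span ⟨i, rfl⟩
  apply le_antisymm
  · rw [latticeIdeal, Ideal.span_le]
    rintro f ⟨u, v, huv, rfl⟩
    rw [← hspan, Submodule.mem_span_range_iff_exists_fun] at huv
    obtain ⟨c, hc⟩ := huv
    set P : Fin n →₀ ℕ := ∑ i, (c i).toNat • toExp (b i) with hP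
    set N : Fin n →₀ ℕ := ∑ i, (-c i).toNat • toExp (b i) with hN
    have hPmem : monomial P (1 : k) - 1 ∈ J := monomial_sum_sub_one J hgen _ _
    have hNmem : monomial N (1 : k) - 1 ∈ J := monomial_sum_sub_one J hgen _ _
    have happ : ∀ (m : Fin r → ℕ) (j : Fin n),
        (((∑ i, m i • toExp (b i) : Fin n →₀ ℕ)) j : ℤ) = ∑ i, (m i : ℤ) * b i j := by
      intro m j
      have h1 : ((∑ i, m i • toExp (b i) : Fin n →₀ ℕ)) j = ∑ i, m i * (b i j).toNat := by
        rw [Finsupp.finset_sum_apply]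
        exact Finset.sum_congr rfl fun i _ => by
          rw [Finsupp.smul_apply, smul_eq_mul, toExp_apply]
      rw [h1]
      push_cast
      exact Finset.sum_congr rfl fun i _ => by rw [Int.toNat_of_nonneg (hb0 i j)]
    have hUN : u + N = v + P := by
      ext j
      have hd : ∑ i, c i * b i j = (u j : ℤ) - (v j : ℤ) := by
        have := congrFun hc j
        simpa [natVec] using this
      have hZ : ((u j : ℤ) + (N j : ℤ)) = ((v j : ℤ) + (P j : ℤ)) := by
        rw [hN, hP, happ, happ]
        have hsub : ∑ i, (((c i).toNat : ℤ) * b i j - ((-c i).toNat : ℤ) * b i j)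
            = ∑ i, c i * b i j := by
          refine Finset.sum_congr rfl fun i _ => ?_
          rw [← sub_mul]
          congr 1
          omega
        rw [Finset.sum_sub_distrib] at hsub
        rw [hd] at hsub
        linarith
      rw [Finsupp.add_apply, Finsupp.add_apply]
      exact_mod_cast hZ
    have key2 : monomial u (1 : k) - monomial v 1
        = monomial v 1 * (monomial P 1 - 1) - monomial u 1 * (monomial N 1 - 1) := by
      have h1 : monomial v (1 : k) * monomial P 1 = monomial u 1 * monomial N 1 := by
        rw [monomial_mul, monomial_mul, hUN]
      linear_combination -h1
    rw [key2]
    exact sub_mem (Ideal.mul_mem_left _ _ hPmem) (Ideal.mul_mem_left _ _ hNmem)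
  · rw [hJ, Ideal.span_le]
    rintro f ⟨i, rfl⟩
    apply Ideal.subset_span
    refine ⟨toExp (b i), 0, ?_, ?_⟩
    · have h0 : natVec (0 : Fin n →₀ ℕ) = 0 := by funext j; simp [natVec]
      rw [natVec_toExp (hb0 i), h0, sub_zero]
      exact hspan ▸ Submodule.subset_span ⟨i, rfl⟩
    · simp [monomial_zero']

end Stmt13Aux
namespace Stmt13Aux

variable {k : Type*} [Field k] {n : ℕ}

lemma Lplus_zero (L : Submodule ℤ (Fin n → ℤ)) : (0 : Fin n → ℤ) ∈ Lplus L :=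
  ⟨L.zero_mem, fun i => le_refl 0⟩

lemma Lplus_add {L : Submodule ℤ (Fin n → ℤ)} {a b : Fin n → ℤ}
    (ha : a ∈ Lplus L) (hb : b ∈ Lplus L) : a + b ∈ Lplus L :=
  ⟨L.add_mem ha.1 hb.1, fun i => add_nonneg (ha.2 i) (hb.2 i)⟩

/-- Every element of a pure lattice is supported on `σ_L`. -/
lemma supported_on_sigma {L : Submodule ℤ (Fin n → ℤ)} (hpure : L = Lpure L)
    {x : Fin n → ℤ} (hx : x ∈ L) {i : Fin n} (hi : i ∉ sigmaL L) : x i = 0 := by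
  rw [hpure, Lpure] at hx
  induction hx using Submodule.span_induction with
  | mem w hw => by_contra hne; exact hi ⟨w, hw, hne⟩
  | zero => rfl
  | add a b _ _ ha hb => simp [ha, hb]
  | smul c a _ ha => simp [ha]

/-- There is an element of `L⁺` strictly positive on all of `σ_L`. -/
lemma exists_pos_on_sigma (L : Submodule ℤ (Fin n → ℤ)) :
    ∃ w ∈ Lplus L, ∀ i ∈ sigmaL L, 0 < w i := by
  classical
  have hg : ∀ i : Fin n, ∃ g : Fin n → ℤ, g ∈ Lplus L ∧ (i ∈ sigmaL L → g i ≠ 0) := by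
    intro i
    by_cases hi : i ∈ sigmaL L
    · obtain ⟨w, hw, hwi⟩ := hi
      exact ⟨w, hw, fun _ => hwi⟩
    · exact ⟨0, Lplus_zero L, fun h => absurd h hi⟩
  choose g hgmem hgne using hg
  refine ⟨∑ i, g i, ?_, ?_⟩
  · have : ∀ (s : Finset (Fin n)), (∑ i ∈ s, g i) ∈ Lplus L := by
      intro s
      induction s using Finset.induction_on with
      | empty => simpa using Lplus_zero L
      | insert _ _ hx ih => rw [Finset.sum_insert hx]; exact Lplus_add (hgmem _) ih
    exact this _
  · intro i hi
    have h1 : 0 < g i i := lt_of_le_of_ne ((hgmem i).2 i) (Ne.symm (hgne i hi))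
    have h2 : g i i ≤ ∑ j, g j i := by
      have := Finset.single_le_sum (f := fun j => g j i)
        (fun j _ => (hgmem j).2 i) (Finset.mem_univ i)
      simpa using this
    have : (∑ j, g j) i = ∑ j, g j i := by simp
    omega

end Stmt13Aux
namespace Stmt13Aux

variable {k : Type*} [Field k] {n : ℕ}

/-- Coordinatewise cast `ℤ^n → ℚ^n` as a `ℤ`-linear map. -/
def ratCast {n : ℕ} : (Fin n → ℤ) →ₗ[ℤ] (Fin n → ℚ) :=
  LinearMap.pi fun i => ((Int.castAddHom ℚ).toIntLinearMap).comp (LinearMap.proj i)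

lemma ratCast_apply (x : Fin n → ℤ) (i : Fin n) : ratCast x i = (x i : ℚ) := rfl

lemma ratCast_inj : Function.Injective (ratCast (n := n)) := by
  intro a b h
  funext i
  have h2 := congrFun h i
  rw [ratCast_apply, ratCast_apply] at h2
  exact_mod_cast h2

set_option maxHeartbeats 2000000 in
/-- A pure lattice admits a basis consisting of nonnegative vectors. -/
lemma exists_nonneg_basis (L : Submodule ℤ (Fin n → ℤ)) (hpure : L = Lpure L) :
    ∃ (m : ℕ) (b : Module.Basis (Fin m) ℤ ↥L), ∀ i j, 0 ≤ ((b i : Fin n → ℤ)) j := by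
  classical
  by_cases hbot : L = ⊥
  · subst hbot
    exact ⟨0, Module.Basis.empty _, fun i => i.elim0⟩
  -- a positive element of L⁺
  obtain ⟨w, hwLp, hwpos⟩ := exists_pos_on_sigma L
  obtain ⟨x0, hx0L, hx0ne⟩ := Submodule.ne_bot_iff L |>.mp hbot
  obtain ⟨i0', hi0'⟩ : ∃ i, x0 i ≠ 0 := by
    by_contra h; push_neg at h; exact hx0ne (funext h)
  have hi0'σ : i0' ∈ sigmaL L := by
    by_contra h; exact hi0' (supported_on_sigma hpure hx0L h)
  have hw0 : w ≠ 0 := fun h => by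
    have := hwpos i0' hi0'σ; rw [h] at this; exact lt_irrefl 0 this
  obtain ⟨i0, hwi0⟩ : ∃ i, w i ≠ 0 := ⟨i0', (hwpos i0' hi0'σ).ne'⟩
  -- the saturated rank-one sublattice L₁ = L ∩ ℚw
  set L₁ : Submodule ℤ (Fin n → ℤ) :=
    L ⊓ (Submodule.comap ratCast ((Submodule.span ℚ {ratCast w}).restrictScalars ℤ)) with hL₁
  have memL₁ : ∀ x, x ∈ L₁ ↔ x ∈ L ∧ ∃ q : ℚ, ∀ i, (x i : ℚ) = q * (w i : ℚ)  := by
    intro x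
    rw [hL₁, Submodule.mem_inf, Submodule.mem_comap, Submodule.restrictScalars_mem,
      Submodule.mem_span_singleton]
    constructor
    · rintro ⟨h1, q, hq⟩
      exact ⟨h1, q, fun i => by
        have := congrFun hq i
        simpa [ratCast_apply, Pi.smul_apply, smul_eq_mul] using this.symm⟩
    · rintro ⟨h1, q, hq⟩
      refine ⟨h1, q, ?_⟩
      funext i
      simpa [ratCast_apply, Pi.smul_apply, smul_eq_mul] using (hq i).symm
  have hwL₁ : w ∈ L₁ := (memL₁ w).mpr ⟨hwLp.1, 1, fun i => by simp⟩
  haveI : Nontrivial ↥L₁ := ⟨⟨w, hwL₁⟩, 0, fun h => hw0 (by simpa using congrArg Subtype.val h)⟩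
  obtain ⟨m₁, b₁⟩ := Submodule.basisOfPid (Pi.basisFun ℤ (Fin n)) L₁
  have hm₁pos : 0 < m₁ := by
    rcases b₁.index_nonempty with ⟨i⟩
    exact i.pos
  have hm₁ : m₁ = 1 := by
    by_contra hne
    have h2 : 2 ≤ m₁ := by omega
    set I0 : Fin m₁ := ⟨0, by omega⟩
    set I1 : Fin m₁ := ⟨1, by omega⟩
    have hI : I0 ≠ I1 := by simp [I0, I1, Fin.ext_iff]
    obtain ⟨-, q0, hq0⟩ := (memL₁ _).mp (b₁ I0).2
    obtain ⟨-, q1, hq1⟩ := (memL₁ _).mp (b₁ I1).2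
    have hz : ((b₁ I1 : Fin n → ℤ) i0) • (b₁ I0) - ((b₁ I0 : Fin n → ℤ) i0) • (b₁ I1)
        = (0 : ↥L₁) := by
      apply Subtype.ext
      apply ratCast_inj
      funext i
      have e0 := hq0 i
      have e1 := hq1 i
      have f0 := hq0 i0
      have f1 := hq1 i0
      push_cast [ratCast_apply]
      simp only [Submodule.coe_sub, Submodule.coe_smul, Pi.sub_apply, Pi.smul_apply,
        smul_eq_mul, map_zero, Pi.zero_apply]
      push_cast
      rw [e0, e1, f0, f1]
      ring
    have hli := b₁.linearIndependent
    rw [linearIndependent_iff'] at hli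
    have := hli {I0, I1}
      (fun i => if i = I0 then ((b₁ I1 : Fin n → ℤ) i0) else -((b₁ I0 : Fin n → ℤ) i0))
      (by
        rw [Finset.sum_pair hI, if_pos rfl, if_neg (show I1 ≠ I0 from fun h => hI h.symm)]
        simpa [hI, (by simp [I0, I1, Fin.ext_iff] : I1 ≠ I0), sub_eq_add_neg] using hz)
      I0 (by simp)
    simp only [eq_self_iff_true, if_true] at this
    have hq1z : q1 = 0 := by
      have h := hq1 i0
      rw [this] at h
      push_cast at h
      rcases mul_eq_zero.mp h.symm with h' | h'
      · exact h'
      · exact absurd h' (by exact_mod_cast hwi0)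
    have hb10 : b₁ I1 = 0 := by
      apply Subtype.ext
      funext i
      have h := hq1 i
      rw [hq1z, zero_mul] at h
      exact_mod_cast h
    exact b₁.ne_zero I1 hb10
  subst hm₁
  -- generator of L₁
  set u' : Fin n → ℤ := (b₁ 0 : Fin n → ℤ) with hu'def
  have hgen' : ∀ x : ↥L₁, x = (b₁.repr x 0) • b₁ 0 := by
    intro x
    have h := b₁.sum_repr x
    rw [Fin.sum_univ_one] at h
    exact h.symm
  obtain ⟨cw, hcw⟩ : ∃ c : ℤ, w = c • u' := by
    refine ⟨b₁.repr ⟨w, hwL₁⟩ 0, ?_⟩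
    have h := congrArg Subtype.val (hgen' ⟨w, hwL₁⟩)
    simpa [hu'def] using h
  have hcw0 : cw ≠ 0 := fun h => hw0 (by rw [hcw, h, zero_smul])
  set s : ℤ := if 0 < cw then 1 else -1 with hs
  have hss : s * s = 1 := by rw [hs]; split <;> norm_num
  set u : Fin n → ℤ := s • u' with hudef
  have hus : u' = s • u := by rw [hudef, smul_smul, hss, one_smul]
  set c : ℤ := s * cw with hcdef
  have hcpos : 0 < c := by
    rcases lt_trichotomy 0 cw with h | h | h
    · rw [hcdef, hs, if_pos h]; simpa using h
    · exact absurd h.symm hcw0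
    · rw [hcdef, hs, if_neg (by omega), neg_one_mul]; omega
  have hwcu : w = c • u := by
    rw [hudef, hcdef, smul_smul, hcw]
    congr 1
    have h : s * cw * s = s * s * cw := by ring
    rw [h, hss, one_mul]
  have huL₁ : u ∈ L₁ := by
    rw [hudef]
    exact L₁.smul_mem s (b₁ 0).2
  have huL : u ∈ L := ((memL₁ u).mp huL₁).1
  have hu0 : u ≠ 0 := fun h => hw0 (by rw [hwcu, h, smul_zero])
  have hunn : ∀ j, 0 ≤ u j := by
    intro j
    have hwj : 0 ≤ w j := hwLp.2 j
    rw [hwcu] at hwj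
    simp only [Pi.smul_apply, smul_eq_mul] at hwj
    nlinarith [hcpos, hwj]
  have hupos : ∀ i ∈ sigmaL L, 0 < u i := by
    intro i hi
    have hwi := hwpos i hi
    rw [hwcu] at hwi
    simp only [Pi.smul_apply, smul_eq_mul] at hwi
    rcases (hunn i).lt_or_eq with h | h
    · exact h
    · rw [← h, mul_zero] at hwi; exact absurd hwi (lt_irrefl 0)
  have hgenU : ∀ x ∈ L₁, ∃ a : ℤ, x = a • u := by
    intro x hx
    have h := congrArg Subtype.val (hgen' ⟨x, hx⟩)
    refine ⟨b₁.repr ⟨x, hx⟩ 0 * s, ?_⟩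
    rw [mul_smul, ← hus]
    simpa [hu'def] using h
  have hsat : ∀ x ∈ L, ∀ t : ℤ, t ≠ 0 → t • x ∈ L₁ → x ∈ L₁ := by
    intro x hxL t ht htx
    obtain ⟨-, q, hq⟩ := (memL₁ _).mp htx
    refine (memL₁ x).mpr ⟨hxL, q / t, fun i => ?_⟩
    have h := hq i
    simp only [Pi.smul_apply, smul_eq_mul] at h
    push_cast at h
    have ht' : (t : ℚ) ≠ 0 := by exact_mod_cast ht
    field_simp
    linear_combination h
  -- the quotient L / L₁ is finite free
  haveI hLfin : Module.Finite ℤ ↥L := Module.Finite.iff_fg.mpr (IsNoetherian.noetherian L)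
  set L₁' : Submodule ℤ ↥L := L₁.comap L.subtype with hL₁'def
  haveI : Module.Finite ℤ (↥L ⧸ L₁') :=
    Module.Finite.of_surjective L₁'.mkQ (Submodule.Quotient.mk_surjective L₁')
  haveI : NoZeroSMulDivisors ℤ (↥L ⧸ L₁') := by
    refine ⟨fun {t x} htx => ?_⟩
    by_cases ht : t = 0
    · exact Or.inl ht
    right
    obtain ⟨y, rfl⟩ := Submodule.Quotient.mk_surjective L₁' x
    rw [← Submodule.Quotient.mk_smul, Submodule.Quotient.mk_eq_zero] at htx
    rw [Submodule.Quotient.mk_eq_zero]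
    rw [hL₁'def, Submodule.mem_comap] at htx ⊢
    exact hsat y.1 y.2 t ht (by simpa using htx)
  haveI : Module.Free ℤ (↥L ⧸ L₁') := Module.free_of_finite_type_torsion_free'
  set J := Module.Free.ChooseBasisIndex ℤ (↥L ⧸ L₁') with hJdef
  set cB := Module.Free.chooseBasis ℤ (↥L ⧸ L₁') with hcBdef
  have hzex : ∀ j : J, ∃ y : ↥L, (Submodule.Quotient.mk y : ↥L ⧸ L₁') = cB j := fun j =>
    Submodule.Quotient.mk_surjective L₁' (cB j)
  choose z hz using hzex
  set U : ↥L := ⟨u, huL⟩ with hUdef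
  set Nf : J → ℕ := fun j => ∑ i, (-((z j : Fin n → ℤ) i)).toNat with hNf
  set Y : J → ↥L := fun j => z j + (Nf j : ℤ) • U with hYdef
  have hYcoord : ∀ j i, (Y j : Fin n → ℤ) i = (z j : Fin n → ℤ) i + (Nf j : ℤ) * u i := by
    intro j i
    rw [hYdef]
    simp [hUdef]
  have hYnn : ∀ j i, 0 ≤ (Y j : Fin n → ℤ) i := by
    intro j i
    rw [hYcoord]
    by_cases hiσ : i ∈ sigmaL L
    · have h1 : 1 ≤ u i := hupos i hiσ
      have h2 : -((z j : Fin n → ℤ) i) ≤ ((-((z j : Fin n → ℤ) i)).toNat : ℤ) :=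
        Int.self_le_toNat _
      have h3n : (-((z j : Fin n → ℤ) i)).toNat ≤ Nf j := by
        have hNfj : Nf j = ∑ i', (-((z j : Fin n → ℤ) i')).toNat := by rw [hNf]
        rw [hNfj]
        exact Finset.single_le_sum (f := fun i' => (-((z j : Fin n → ℤ) i')).toNat)
          (fun _ _ => Nat.zero_le _) (Finset.mem_univ i)
      have h3 : ((-((z j : Fin n → ℤ) i)).toNat : ℤ) ≤ (Nf j : ℤ) := by exact_mod_cast h3n
      have h4 : (Nf j : ℤ) ≤ (Nf j : ℤ) * u i :=
        le_mul_of_one_le_right (Int.natCast_nonneg _) h1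
      linarith
    · rw [supported_on_sigma hpure (z j).2 hiσ, supported_on_sigma hpure huL hiσ]
      simp
  have hUmem : U ∈ L₁' := by
    rw [hL₁'def, Submodule.mem_comap]
    simpa using huL₁
  have hmkU : (Submodule.Quotient.mk U : ↥L ⧸ L₁') = 0 :=
    (Submodule.Quotient.mk_eq_zero _).mpr hUmem
  have hmkY : ∀ j, (Submodule.Quotient.mk (Y j) : ↥L ⧸ L₁') = cB j := by
    intro j
    rw [hYdef]
    show (Submodule.Quotient.mk (z j + (Nf j : ℤ) • U) : ↥L ⧸ L₁') = cB j
    rw [Submodule.Quotient.mk_add, Submodule.Quotient.mk_smul, hmkU, smul_zero, add_zero, hz]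
  set BV : Option J → ↥L := fun o => Option.elim o U Y with hBVdef
  have hBVnone : BV none = U := rfl
  have hBVsome : ∀ j, BV (some j) = Y j := fun j => rfl
  have hliBV : LinearIndependent ℤ BV := by
    rw [Fintype.linearIndependent_iff]
    intro g hg
    rw [Fintype.sum_option] at hg
    simp only [hBVnone, hBVsome] at hg
    have h2 := congrArg (L₁'.mkQ) hg
    simp only [map_add, map_sum, map_smul, map_zero, Submodule.mkQ_apply] at h2
    rw [hmkU, smul_zero, zero_add] at h2
    have h3 : ∑ j, g (some j) • cB j = 0 := by
      rw [← h2]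
      exact (Finset.sum_congr rfl fun j _ => by rw [hmkY j]).symm
    have hj0 : ∀ j, g (some j) = 0 :=
      Fintype.linearIndependent_iff.mp cB.linearIndependent _ h3
    have hsum0 : ∑ j, g (some j) • Y j = 0 :=
      Finset.sum_eq_zero fun j _ => by rw [hj0 j, zero_smul]
    rw [hsum0, add_zero] at hg
    have hU0 : U ≠ 0 := fun h => hu0 (by simpa [hUdef] using congrArg Subtype.val h)
    have hgnone : g none = 0 := by
      rcases smul_eq_zero.mp hg with h | h
      · exact h
      · exact absurd h hU0
    intro o
    cases o with
    | none => exact hgnone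
    | some j => exact hj0 j
  have hspanBV : ⊤ ≤ Submodule.span ℤ (Set.range BV) := by
    rintro x -
    have hrepr : ∑ j, cB.repr (Submodule.Quotient.mk x) j • cB j
        = (Submodule.Quotient.mk x : ↥L ⧸ L₁') := cB.sum_repr _
    set a : J → ℤ := fun j => cB.repr (Submodule.Quotient.mk x) j with ha
    set x' : ↥L := x - ∑ j, a j • Y j with hx'
    have hx'mem : x' ∈ L₁' := by
      rw [← Submodule.Quotient.mk_eq_zero, hx', Submodule.Quotient.mk_sub]
      have hh : (Submodule.Quotient.mk (∑ j, a j • Y j) : ↥L ⧸ L₁') = ∑ j, a j • cB j := by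
        rw [← Submodule.mkQ_apply, map_sum]
        exact Finset.sum_congr rfl fun j _ => by
          rw [map_smul, Submodule.mkQ_apply, hmkY]
      rw [hh, sub_eq_zero]
      exact hrepr.symm
    obtain ⟨aU, haU⟩ := hgenU x'.1 (by
      rw [hL₁'def, Submodule.mem_comap] at hx'mem
      simpa using hx'mem)
    have hx'U : x' = aU • U := Subtype.ext (by rw [haU]; simp [hUdef])
    have hxeq : x = x' + ∑ j, a j • Y j := by rw [hx', sub_add_cancel]
    rw [hxeq, hx'U]
    refine Submodule.add_mem _
      (Submodule.smul_mem _ _ (Submodule.subset_span ⟨none, hBVnone⟩))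
      (Submodule.sum_mem _ fun j _ =>
        Submodule.smul_mem _ _ (Submodule.subset_span ⟨some j, hBVsome j⟩))
  refine ⟨Fintype.card (Option J),
    (Module.Basis.mk hliBV hspanBV).reindex (Fintype.equivFin (Option J)), ?_⟩
  intro i j'
  rw [Module.Basis.reindex_apply, Module.Basis.mk_apply]
  cases ho : (Fintype.equivFin (Option J)).symm i with
  | none => rw [hBVnone]; exact hunn j'
  | some j => rw [hBVsome]; exact hYnn j j'

end Stmt13Aux
open Stmt13Aux in
set_option maxHeartbeats 1000000 in
/-- for a pure lattice `L = L_pure` of rank `r`, `μ(I_L) = r` : `I_L` is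
generated by `r` binomials and by no fewer. -/
theorem stmt13 (k : Type*) [Field k] {n r : ℕ} (L : Submodule ℤ (Fin n → ℤ))
    (hpure : L = Lpure L) (hrank : Module.finrank ℤ ↥L = r) :
    muIdeal k L = r ∧
    ∃ S : Finset (MvPolynomial (Fin n) k), S.card = r ∧
      (∀ f ∈ S, IsLatticeBinomial k L f) ∧
      Ideal.span (S : Set (MvPolynomial (Fin n) k)) = latticeIdeal k L := by
  classical
  obtain ⟨m0, B, hBnn⟩ := exists_nonneg_basis L hpure
  have hm0 : m0 = r := by
    have h := Module.finrank_eq_card_basis B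
    rw [hrank] at h
    simpa using h.symm
  subst hm0
  set bv : Fin m0 → (Fin n → ℤ) := fun i => (B i : Fin n → ℤ) with hbvdef
  have hbv0 : ∀ i j, 0 ≤ bv i j := hBnn
  have hbvL : ∀ i, bv i ∈ L := fun i => (B i).2
  have hbvspan : Submodule.span ℤ (Set.range bv) = L := by
    have h1 : Set.range bv = L.subtype '' Set.range B := by
      rw [← Set.range_comp]; rfl
    rw [h1, Submodule.span_image, B.span_eq, Submodule.map_subtype_top]
  set fB : Fin m0 → MvPolynomial (Fin n) k :=
    fun i => monomial (toExp (bv i)) (1 : k) - 1 with hfBdef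
  have hinj : Function.Injective fB := by
    intro i j h
    rw [hfBdef] at h
    have h2 : monomial (toExp (bv i)) (1 : k) = monomial (toExp (bv j)) 1 :=
      sub_left_injective h
    have h3 : toExp (bv i) = toExp (bv j) :=
      MvPolynomial.monomial_left_injective (one_ne_zero (α := k)) h2
    have h4 : bv i = bv j := by
      have h5 := congrArg natVec h3
      rwa [natVec_toExp (hbv0 i), natVec_toExp (hbv0 j)] at h5
    exact B.injective (Subtype.ext h4)
  set S : Finset (MvPolynomial (Fin n) k) := Finset.image fB Finset.univ with hSdef
  have hScard : S.card = m0 := by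
    rw [hSdef, Finset.card_image_of_injective _ hinj, Finset.card_univ, Fintype.card_fin]
  have hScoe : (S : Set (MvPolynomial (Fin n) k)) = Set.range fB := by
    rw [hSdef]
    simp [Finset.coe_image]
  have hSbin : ∀ f ∈ S, IsLatticeBinomial k L f := by
    intro f hf
    rw [hSdef, Finset.mem_image] at hf
    obtain ⟨i, -, rfl⟩ := hf
    refine ⟨toExp (bv i), 0, ?_, ?_⟩
    · have h0 : natVec (0 : Fin n →₀ ℕ) = 0 := by funext jj; simp [natVec]
      rw [natVec_toExp (hbv0 i), h0, sub_zero]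
      exact hbvL i
    · rw [hfBdef]
      simp [monomial_zero']
  have hSspan : Ideal.span (S : Set (MvPolynomial (Fin n) k)) = latticeIdeal k L := by
    rw [hScoe, hfBdef]
    exact (latticeIdeal_eq_span hbv0 hbvspan).symm
  have hlow : ∀ (S' : Finset (MvPolynomial (Fin n) k)),
      (∀ f ∈ S', IsLatticeBinomial k L f) →
      Ideal.span (S' : Set (MvPolynomial (Fin n) k)) = latticeIdeal k L →
      m0 ≤ S'.card := by
    intro S' hbin hspan'
    have hch : ∀ f : {f // f ∈ S'}, ∃ uv : (Fin n →₀ ℕ) × (Fin n →₀ ℕ),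
        natVec uv.1 - natVec uv.2 ∈ L ∧
        (f : MvPolynomial (Fin n) k) = monomial uv.1 1 - monomial uv.2 1 := by
      intro f
      obtain ⟨u, v, h1, h2⟩ := hbin f f.2
      exact ⟨(u, v), h1, h2⟩
    choose uv huvL huveq using hch
    set d : {f // f ∈ S'} → (Fin n → ℤ) :=
      fun f => natVec (uv f).1 - natVec (uv f).2 with hddef
    set L' := Submodule.span ℤ (Set.range d) with hL'def
    have hL'le : L' ≤ L := by
      rw [hL'def, Submodule.span_le]
      rintro x ⟨f, rfl⟩
      exact huvL f
    have hIdle : latticeIdeal k L ≤ latticeIdeal k L' := by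
      rw [← hspan', Ideal.span_le]
      intro f hf
      have hfS : f ∈ S' := hf
      apply Ideal.subset_span
      exact ⟨(uv ⟨f, hfS⟩).1, (uv ⟨f, hfS⟩).2,
        Submodule.subset_span ⟨⟨f, hfS⟩, rfl⟩, huveq ⟨f, hfS⟩⟩
    have hLle : L ≤ L' := by
      intro x hx
      have hbinx : (monomial (toExp x) (1 : k) - monomial (toExp (-x)) 1)
          ∈ latticeIdeal k L := by
        apply Ideal.subset_span
        exact ⟨toExp x, toExp (-x), by rw [natVec_sub_natVec_toExp]; exact hx, rfl⟩
      have hmem := hIdle hbinx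
      have hxd := diff_mem_of_mem_latticeIdeal hmem
      rwa [natVec_sub_natVec_toExp] at hxd
    have hLL' : L = L' := le_antisymm hLle hL'le
    set dL : {f // f ∈ S'} → ↥L := fun f => ⟨d f, hLL' ▸ Submodule.subset_span ⟨f, rfl⟩⟩
      with hdLdef
    have hspanTop : Submodule.span ℤ (Set.range dL) = ⊤ := by
      rw [eq_top_iff]
      rintro x -
      have hx1 : (x : Fin n → ℤ) ∈ L' := hLL' ▸ x.2
      rw [hL'def, Submodule.mem_span_range_iff_exists_fun] at hx1
      obtain ⟨cf, hcf⟩ := hx1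
      rw [Submodule.mem_span_range_iff_exists_fun]
      refine ⟨cf, ?_⟩
      have h5 : L.subtype (∑ f, cf f • dL f) = ∑ f, cf f • d f := by
        rw [map_sum]
        exact Finset.sum_congr rfl fun f _ => by rw [map_smul]; rfl
      apply Subtype.val_injective
      rw [show ((∑ f, cf f • dL f : ↥L) : Fin n → ℤ) = ∑ f, cf f • d f from h5, hcf]
    have hcard2 : Fintype.card (Fin m0) ≤ Fintype.card (Set.range dL) :=
      Basis.le_span'' B hspanTop
    have h6 : Fintype.card (Set.range dL) ≤ Fintype.card {f // f ∈ S'} :=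
      Fintype.card_range_le dL
    have h7 : Fintype.card {f // f ∈ S'} = S'.card := Fintype.card_coe S'
    simpa [Fintype.card_fin] using hcard2.trans (h6.trans h7.le)
  refine ⟨?_, S, hScard, hSbin, hSspan⟩
  rw [muIdeal]
  apply le_antisymm
  · exact Nat.sInf_le ⟨S, hScard, hSbin, hSspan⟩
  · have hne : {m | ∃ S'' : Finset (MvPolynomial (Fin n) k), S''.card = m ∧
        (∀ f ∈ S'', IsLatticeBinomial k L f) ∧
        Ideal.span (S'' : Set (MvPolynomial (Fin n) k)) = latticeIdeal k L}.Nonempty :=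
      ⟨m0, S, hScard, hSbin, hSspan⟩
    obtain ⟨S'', hc, hb, hs⟩ := Nat.sInf_mem hne
    rw [← hc]
    exact hlow S'' hb hs
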